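/- Let r(n) = √(n+1) · arcsin(1/√(n+1)) − √n · arcsin(1/√n). Then r(n) ~ −(1/6) n^{-2} as n → ∞, i.e. n² r(n) → −1/6. -/

import Mathlib

open Filter Real Set

/-- The derivative of `x ↦ √x · arcsin(1/√x)`. -/
noncomputable def phi (x : ℝ) : ℝ :=
  1 / (2 * Real.sqrt x) * Real.arcsin (1 / Real.sqrt x) +
    Real.sqrt x * (1 / Real.sqrt (1 - (1 / Real.sqrt x) ^ 2) *
      (-(1 / (2 * Real.sqrt x)) / Real.sqrt x ^ 2))

noncomputable def num (y : ℝ) : ℝ := Real.arcsin y - y / Real.sqrt (1 - y ^ 2)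

lemma hasDerivAt_F {x : ℝ} (hx : 1 < x) :
    HasDerivAt (fun x => Real.sqrt x * Real.arcsin (1 / Real.sqrt x)) (phi x) x := by
  have hx0 : (0:ℝ) < x := lt_trans one_pos hx
  have hs1 : 1 < Real.sqrt x := by
    rw [show (1:ℝ) = Real.sqrt 1 by simp]
    exact Real.sqrt_lt_sqrt (by norm_num) hx
  have hs0 : (0:ℝ) < Real.sqrt x := lt_trans one_pos hs1
  have hs : HasDerivAt Real.sqrt (1 / (2 * Real.sqrt x)) x := Real.hasDerivAt_sqrt hx0.ne'
  have hinv : HasDerivAt (fun x => (Real.sqrt x)⁻¹)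
      (-(1 / (2 * Real.sqrt x)) / Real.sqrt x ^ 2) x := hs.inv hs0.ne'
  have hipos : (0:ℝ) < (Real.sqrt x)⁻¹ := inv_pos.mpr hs0
  have hy1 : (Real.sqrt x)⁻¹ ≠ -1 := by intro h; rw [h] at hipos; linarith
  have hy2 : (Real.sqrt x)⁻¹ ≠ 1 := by
    rw [inv_eq_one_div]
    exact ne_of_lt ((div_lt_one hs0).mpr hs1)
  have harc := (Real.hasDerivAt_arcsin hy1 hy2).comp x hinv
  have := hs.mul harc
  simpa only [phi, Function.comp_def, one_div, Pi.mul_def] using this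

lemma hasDerivAt_num {y : ℝ} (hy : y ∈ Set.Ioo (0:ℝ) 1) :
    HasDerivAt num (-(y ^ 2) / Real.sqrt (1 - y ^ 2) ^ 3) y := by
  obtain ⟨hy0, hy1⟩ := hy
  have h1 : (0:ℝ) < 1 - y ^ 2 := by nlinarith
  have hs0 : (0:ℝ) < Real.sqrt (1 - y ^ 2) := Real.sqrt_pos.mpr h1
  have hs2 : Real.sqrt (1 - y ^ 2) ^ 2 = 1 - y ^ 2 := Real.sq_sqrt h1.le
  have hq : HasDerivAt (fun y : ℝ => 1 - y ^ 2) (-(2 * y)) y := by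
    simpa using ((hasDerivAt_pow 2 y).const_sub 1)
  have hsq : HasDerivAt (fun y : ℝ => Real.sqrt (1 - y ^ 2))
      (1 / (2 * Real.sqrt (1 - y ^ 2)) * -(2 * y)) y :=
    (Real.hasDerivAt_sqrt h1.ne').comp y hq
  have hdiv : HasDerivAt (fun y : ℝ => y / Real.sqrt (1 - y ^ 2))
      ((1 * Real.sqrt (1 - y ^ 2) - y * (1 / (2 * Real.sqrt (1 - y ^ 2)) * -(2 * y))) /
        Real.sqrt (1 - y ^ 2) ^ 2) y :=
    (hasDerivAt_id y).div hsq hs0.ne'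
  have harc : HasDerivAt Real.arcsin (1 / Real.sqrt (1 - y ^ 2)) y :=
    Real.hasDerivAt_arcsin (by linarith) hy1.ne
  have := harc.sub hdiv
  convert this using 1
  · rfl
  · rfl
  · rfl
  field_simp
  ring

lemma tendsto_G :
    Tendsto (fun y : ℝ => num y / y ^ 3) (nhdsWithin 0 (Set.Ioi 0)) (nhds (-(1/3))) := by
  have hmem : Set.Ioo (0:ℝ) 1 ∈ nhdsWithin (0:ℝ) (Set.Ioi 0) :=
    Ioo_mem_nhdsGT one_pos
  apply HasDerivAt.lhopital_zero_nhdsGT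
    (f' := fun y => -(y ^ 2) / Real.sqrt (1 - y ^ 2) ^ 3) (g' := fun y => 3 * y ^ 2)
  · filter_upwards [hmem] with y hy; exact hasDerivAt_num hy
  · filter_upwards [hmem] with y hy
    simpa using hasDerivAt_pow 3 y
  · filter_upwards [hmem] with y hy
    exact mul_ne_zero three_ne_zero (pow_ne_zero 2 hy.1.ne')
  · have hc : ContinuousAt num 0 := by
      apply ContinuousAt.sub Real.continuous_arcsin.continuousAt
      exact continuousAt_id.div
        ((Real.continuous_sqrt.comp (by fun_prop : Continuous fun y : ℝ => 1 - y ^ 2)).continuousAt)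
        (by norm_num)
    have := hc.tendsto.mono_left (nhdsWithin_le_nhds (s := Set.Ioi (0:ℝ)))
    simpa [num] using this
  · have := ((continuous_pow 3).tendsto (0:ℝ)).mono_left
      (nhdsWithin_le_nhds (s := Set.Ioi (0:ℝ)))
    simpa using this
  · have h1 : Tendsto (fun y : ℝ => Real.sqrt (1 - y ^ 2)) (nhds 0) (nhds 1) := by
      have := (Real.continuous_sqrt.comp
        (by fun_prop : Continuous fun y : ℝ => 1 - y ^ 2)).tendsto 0
      simpa [Function.comp_def] using this
    have hlim : Tendsto (fun y : ℝ => -(1 / (3 * Real.sqrt (1 - y ^ 2) ^ 3))) (nhds 0)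
        (nhds (-(1/3))) := by
      have h2 : Tendsto (fun y : ℝ => 3 * Real.sqrt (1 - y ^ 2) ^ 3) (nhds 0) (nhds 3) := by
        simpa using (h1.pow 3).const_mul 3
      have := ((tendsto_const_nhds (x := (1:ℝ))).div h2 (by norm_num)).neg
      simpa using this
    apply (hlim.mono_left nhdsWithin_le_nhds).congr'
    filter_upwards [hmem] with y hy
    have hy0 : y ≠ 0 := hy.1.ne'
    have h1' : (0:ℝ) < 1 - y ^ 2 := by nlinarith [hy.1, hy.2]
    have hs0 : (0:ℝ) < Real.sqrt (1 - y ^ 2) := Real.sqrt_pos.mpr h1'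
    field_simp

lemma phi_eq {x : ℝ} (hx : 1 < x) :
    x ^ 2 * phi x = num (1 / Real.sqrt x) / (1 / Real.sqrt x) ^ 3 / 2 := by
  have hx0 : (0:ℝ) < x := lt_trans one_pos hx
  have hs0 : (0:ℝ) < Real.sqrt x := Real.sqrt_pos.mpr hx0
  have hs2 : Real.sqrt x ^ 2 = x := Real.sq_sqrt hx0.le
  have hys : (1 / Real.sqrt x) ^ 2 = 1 / x := by
    rw [div_pow, one_pow, hs2]
  have ht1 : (0:ℝ) < 1 - 1 / x := by
    rw [sub_pos]; exact (div_lt_one hx0).mpr hx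
  have ht0 : (0:ℝ) < Real.sqrt (1 - 1 / x) := Real.sqrt_pos.mpr ht1
  rw [phi, num, hys]
  set s := Real.sqrt x with hsdef
  set t := Real.sqrt (1 - 1 / x) with htdef
  set A := Real.arcsin (1 / s) with hAdef
  rw [← hs2]
  field_simp
  ring

lemma tendsto_phi' : Tendsto (fun x : ℝ => x ^ 2 * phi x) atTop (nhds (-(1/6))) := by
  have hsqrt_top : Tendsto Real.sqrt atTop atTop :=
    (tendsto_rpow_atTop (by norm_num : (0:ℝ) < 1/2)).congr
      fun x => (Real.sqrt_eq_rpow x).symm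
  have hy : Tendsto (fun x : ℝ => 1 / Real.sqrt x) atTop (nhdsWithin 0 (Set.Ioi 0)) := by
    rw [tendsto_nhdsWithin_iff]
    constructor
    · simpa [one_div, Function.comp_def] using tendsto_inv_atTop_zero.comp hsqrt_top
    · filter_upwards [eventually_gt_atTop (0:ℝ)] with x hx
      exact one_div_pos.mpr (Real.sqrt_pos.mpr hx)
  have hG := (tendsto_G.comp hy).div_const 2
  have : -(1/3) / 2 = -(1/6 : ℝ) := by norm_num
  rw [this] at hG
  apply hG.congr'
  filter_upwards [eventually_gt_atTop (1:ℝ)] with x hx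
  exact (phi_eq hx).symm

lemma mvt_step (n : ℕ) (hn : 2 ≤ n) :
    ∃ c ∈ Set.Ioo (n : ℝ) ((n : ℝ) + 1),
      Real.sqrt ((n : ℝ) + 1) * Real.arcsin (1 / Real.sqrt ((n : ℝ) + 1))
        - Real.sqrt n * Real.arcsin (1 / Real.sqrt n) = phi c := by
  have hn1 : (1:ℝ) < (n : ℝ) := by exact_mod_cast Nat.lt_of_lt_of_le one_lt_two hn
  have hlt : (n : ℝ) < (n : ℝ) + 1 := by linarith
  have hcont : ContinuousOn (fun x => Real.sqrt x * Real.arcsin (1 / Real.sqrt x))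
      (Set.Icc (n : ℝ) ((n : ℝ) + 1)) := fun x hx =>
    (hasDerivAt_F (lt_of_lt_of_le hn1 hx.1)).continuousAt.continuousWithinAt
  obtain ⟨c, hc, heq⟩ := exists_hasDerivAt_eq_slope
    (fun x => Real.sqrt x * Real.arcsin (1 / Real.sqrt x)) phi hlt hcont
    (fun x hx => hasDerivAt_F (lt_trans hn1 hx.1))
  refine ⟨c, hc, ?_⟩
  rw [heq]
  simp

/-- With `r(n) = √(n+1)·arcsin(1/√(n+1)) − √n·arcsin(1/√n)`, one has
`r(n) ~ −(1/6) n⁻²`, i.e. `n² r(n) → −1/6` as `n → ∞`. -/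
theorem median_increment_decay :
    Filter.Tendsto
      (fun n : ℕ => (n : ℝ) ^ 2 *
        (Real.sqrt (n + 1) * Real.arcsin (1 / Real.sqrt (n + 1))
          - Real.sqrt n * Real.arcsin (1 / Real.sqrt n)))
      Filter.atTop (nhds (-(1 / 6))) := by
  set c : ℕ → ℝ := fun n => if h : 2 ≤ n then (mvt_step n h).choose else (n : ℝ) + 1/2
    with hcdef
  have hc_mem : ∀ n : ℕ, c n ∈ Set.Ioo (n : ℝ) ((n : ℝ) + 1) := by
    intro n
    by_cases h : 2 ≤ n
    · simp only [hcdef, dif_pos h]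
      exact (mvt_step n h).choose_spec.1
    · simp only [hcdef, dif_neg h]
      constructor <;> [linarith; linarith]
  have hc_eq : ∀ n : ℕ, 2 ≤ n →
      Real.sqrt ((n : ℝ) + 1) * Real.arcsin (1 / Real.sqrt ((n : ℝ) + 1))
        - Real.sqrt (n : ℝ) * Real.arcsin (1 / Real.sqrt (n : ℝ)) = phi (c n) := by
    intro n h
    simp only [hcdef, dif_pos h]
    exact (mvt_step n h).choose_spec.2
  have hc_top : Tendsto c atTop atTop :=
    tendsto_atTop_mono (fun n => (hc_mem n).1.le) tendsto_natCast_atTop_atTop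
  have T1 : Tendsto (fun n : ℕ => (c n) ^ 2 * phi (c n)) atTop (nhds (-(1/6))) :=
    tendsto_phi'.comp hc_top
  have T2 : Tendsto (fun n : ℕ => ((n : ℝ) / c n) ^ 2) atTop (nhds 1) := by
    have hlow : Tendsto (fun n : ℕ => (n : ℝ) / ((n : ℝ) + 1)) atTop (nhds 1) := by
      have h0 : Tendsto (fun n : ℕ => 1 - 1 / ((n : ℝ) + 1)) atTop (nhds 1) := by
        simpa using (tendsto_one_div_add_atTop_nhds_zero_nat (𝕜 := ℝ)).const_sub 1
      apply h0.congr
      intro n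
      have : ((n : ℝ) + 1) ≠ 0 := by positivity
      field_simp
      ring
    have hbase : Tendsto (fun n : ℕ => (n : ℝ) / c n) atTop (nhds 1) := by
      apply tendsto_of_tendsto_of_tendsto_of_le_of_le' hlow tendsto_const_nhds
      · filter_upwards with n
        have h1 := (hc_mem n).2
        have h2 := (hc_mem n).1
        have hcpos : (0:ℝ) < c n := lt_of_le_of_lt (Nat.cast_nonneg n) h2
        exact div_le_div_of_nonneg_left (Nat.cast_nonneg n) hcpos h1.le
      · filter_upwards with n
        have h2 := (hc_mem n).1
        have hcpos : (0:ℝ) < c n := lt_of_le_of_lt (Nat.cast_nonneg n) h2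
        exact (div_le_one hcpos).mpr h2.le
    simpa using hbase.pow 2
  have := T2.mul T1
  rw [one_mul] at this
  apply this.congr'
  filter_upwards [eventually_ge_atTop 2] with n hn
  have hcne : c n ≠ 0 :=
    (lt_of_le_of_lt (Nat.cast_nonneg n) (hc_mem n).1).ne'
  have := hc_eq n hn
  rw [this]
  field_simp
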